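/- Let a, b be coprime positive integers. If n ∈ ℤ≥1 with n ≡ 1 (mod b) is a product of more than D primes each congruent to a modulo b, where D is the multiplicative order of a in (ℤ/b)*, then n is reducible in M_{1,b}. -/

import Mathlib

/-- Membership in the regular ACM `M_{1,b}`. -/
def memReg (b n : ℕ) : Prop := 1 ≤ n ∧ n ≡ 1 [MOD b]

lemma prod_modEq_pow (a b : ℕ) :
    ∀ (L : List ℕ), (∀ p ∈ L, p ≡ a [MOD b]) → L.prod ≡ a ^ L.length [MOD b] := by
  intro L
  induction L with
  | nil => intro _; simp; rfl
  | cons p t ih =>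
    intro h
    simp only [List.prod_cons, List.length_cons, pow_succ]
    calc p * t.prod ≡ a * a ^ t.length [MOD b] :=
          (h p (by simp)).mul (ih fun q hq => h q (by simp [hq]))
      _ = a ^ t.length * a := mul_comm _ _

lemma one_lt_prod_of_primes (L : List ℕ) (hne : L ≠ []) (h : ∀ p ∈ L, p.Prime) :
    1 < L.prod := by
  cases L with
  | nil => exact absurd rfl hne
  | cons p t =>
    have hp := h p (by simp)
    have ht : 0 < t.prod :=
      List.prod_pos fun q hq => (h q (by simp [hq])).pos
    calc 1 < p := hp.one_lt
      _ = p * 1 := (mul_one p).symm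
      _ ≤ p * t.prod := Nat.mul_le_mul_left p ht
      _ = (p :: t).prod := by simp

theorem regular_acm_order_reducible (a b : ℕ) (ha : 0 < a) (hb : 0 < b)
    (hcop : Nat.Coprime a b) (n : ℕ) (hn : 1 ≤ n) (hnb : n ≡ 1 [MOD b])
    (L : List ℕ) (hL : ∀ p ∈ L, p.Prime ∧ p ≡ a [MOD b]) (hprod : n = L.prod)
    (hlen : orderOf (ZMod.unitOfCoprime a hcop) < L.length) :
    ∃ m m' : ℕ, memReg b m ∧ memReg b m' ∧ 1 < m ∧ 1 < m' ∧ n = m * m' := by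
  set u := ZMod.unitOfCoprime a hcop with hu
  set D := orderOf u with hD
  have hDpos : 0 < D := orderOf_pos u
  have hDle : D ≤ L.length := le_of_lt hlen
  -- a ^ D ≡ 1 [MOD b]
  have haD : a ^ D ≡ 1 [MOD b] := by
    have h1 : (u : ZMod b) ^ D = 1 := by
      rw [← Units.val_pow_eq_pow_val, hD, pow_orderOf_eq_one, Units.val_one]
    have h2 : ((a ^ D : ℕ) : ZMod b) = ((1 : ℕ) : ZMod b) := by
      push_cast
      simpa [hu, ZMod.coe_unitOfCoprime] using h1
    exact (ZMod.natCast_eq_natCast_iff _ _ _).mp h2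
  set m := (L.take D).prod with hm
  set m' := (L.drop D).prod with hm'
  have hsplit : n = m * m' := by
    rw [hprod, hm, hm', List.prod_take_mul_prod_drop]
  have hlen1 : (L.take D).length = D := by
    simp [List.length_take, Nat.min_eq_left hDle]
  have hm1 : m ≡ 1 [MOD b] := by
    have := prod_modEq_pow a b (L.take D)
      (fun p hp => (hL p (List.mem_of_mem_take hp)).2)
    rw [hlen1] at this
    exact this.trans haD
  have hmlt : 1 < m :=
    one_lt_prod_of_primes _ (by
      intro hnil
      have : (L.take D).length = 0 := by rw [hnil]; rfl
      omega)
      (fun p hp => (hL p (List.mem_of_mem_take hp)).1)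
  have hm'lt : 1 < m' :=
    one_lt_prod_of_primes _ (by
      intro hnil
      have : (L.drop D).length = 0 := by rw [hnil]; rfl
      rw [List.length_drop] at this
      omega)
      (fun p hp => (hL p (List.mem_of_mem_drop hp)).1)
  have hm'1 : m' ≡ 1 [MOD b] := by
    have h1 : m * m' ≡ 1 * m' [MOD b] := hm1.mul_right m'
    have h2 : m' ≡ n [MOD b] := by
      rw [hsplit]
      simpa using h1.symm
    exact h2.trans hnb
  exact ⟨m, m', ⟨le_of_lt hmlt, hm1⟩, ⟨le_of_lt hm'lt, hm'1⟩, hmlt, hm'lt, hsplit⟩
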